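/- For every integer ℓ ≥ 2 and all real numbers t, y with 0 < t < y < 1, one has t·(y^(1/ℓ) − t^(1/ℓ)) / (t^(1/ℓ)·y·(1 − y^(1/ℓ))) ≤ (1 − 1/ℓ)^(ℓ−1) / (ℓ·(1 − y^(1/ℓ))). -/

import Mathlib

lemma key (n : ℕ) (hn : 2 ≤ n) (u v : ℝ) (hu : 0 < u) (huv : u < v) :
    (n : ℝ) * (u ^ (n - 1) * (v - u)) ≤ (1 - 1 / (n : ℝ)) ^ (n - 1) * v ^ n := by
  have hN : (2 : ℝ) ≤ (n : ℝ) := by exact_mod_cast hn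
  have hN1 : (1 : ℝ) < (n : ℝ) := by linarith
  have hw₁ : (0 : ℝ) < 1 - 1 / n := by
    rw [sub_pos, div_lt_one (by linarith)]; linarith
  set w₁ : ℝ := 1 - 1 / n with hw₁def
  set p₁ : ℝ := u / w₁ with hp₁def
  set p₂ : ℝ := n * (v - u) with hp₂def
  have hp₁ : 0 < p₁ := div_pos hu hw₁
  have hp₂ : 0 < p₂ := by
    apply mul_pos (by linarith) (by linarith)
  have hsum : w₁ + 1 / n = 1 := by ring
  have h := Real.geom_mean_le_arith_mean2_weighted hw₁.le
    (by positivity : (0:ℝ) ≤ 1 / n) hp₁.le hp₂.le hsum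
  have harith : w₁ * p₁ + 1 / n * p₂ = v := by
    rw [hp₁def, hp₂def]
    field_simp
    ring
  rw [harith] at h
  have h2 := Real.rpow_le_rpow (by positivity) h (le_of_lt (by linarith : (0:ℝ) < n))
  rw [Real.mul_rpow (by positivity) (by positivity),
    ← Real.rpow_mul hp₁.le, ← Real.rpow_mul hp₂.le] at h2
  have e1 : w₁ * (n : ℝ) = ((n - 1 : ℕ) : ℝ) := by
    rw [Nat.cast_sub (by omega), hw₁def]
    field_simp
    norm_num
  have e2 : 1 / (n : ℝ) * (n : ℝ) = 1 := by field_simp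
  rw [e1, e2, Real.rpow_one, Real.rpow_natCast p₁, Real.rpow_natCast v] at h2
  -- h2 : p₁ ^ (n-1) * p₂ ≤ v ^ n
  have hexp : p₁ ^ (n - 1) * p₂ = (n : ℝ) * (u ^ (n-1) * (v - u)) / w₁ ^ (n-1) := by
    rw [hp₁def, hp₂def, div_pow]
    field_simp
  rw [hexp, div_le_iff₀ (by positivity)] at h2
  nlinarith [h2]

theorem stmt0 (ℓ : ℕ) (hℓ : 2 ≤ ℓ) (t y : ℝ) (ht : 0 < t) (hty : t < y) (hy : y < 1) :
    t * (y ^ ((1 : ℝ) / ℓ) - t ^ ((1 : ℝ) / ℓ)) /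
        (t ^ ((1 : ℝ) / ℓ) * y * (1 - y ^ ((1 : ℝ) / ℓ)))
      ≤ (1 - 1 / (ℓ : ℝ)) ^ (ℓ - 1) / ((ℓ : ℝ) * (1 - y ^ ((1 : ℝ) / ℓ))) := by
  have hy0 : 0 < y := lt_trans ht hty
  have hℓ0 : (0:ℝ) < ℓ := by positivity
  have hexp : (0:ℝ) < 1 / ℓ := by positivity
  set u : ℝ := t ^ ((1 : ℝ) / ℓ) with hu_def
  set v : ℝ := y ^ ((1 : ℝ) / ℓ) with hv_def
  have hu : 0 < u := Real.rpow_pos_of_pos ht _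
  have hv : 0 < v := Real.rpow_pos_of_pos hy0 _
  have huv : u < v := Real.rpow_lt_rpow ht.le hty hexp
  have hv1 : v < 1 := Real.rpow_lt_one hy0.le hy hexp
  have htu : t = u ^ ℓ := by
    rw [hu_def, one_div, Real.rpow_inv_natCast_pow ht.le (by omega)]
  have hyv : y = v ^ ℓ := by
    rw [hv_def, one_div, Real.rpow_inv_natCast_pow hy0.le (by omega)]
  rw [htu, hyv]
  have hk := key ℓ hℓ u v hu huv
  rw [div_le_div_iff₀ (mul_pos (mul_pos hu (pow_pos hv ℓ)) (by linarith)) (mul_pos hℓ0 (by linarith))]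
  have hul : u ^ ℓ = u * u ^ (ℓ - 1) := by
    rw [← pow_succ']; congr 1; omega
  rw [hul]
  nlinarith [mul_le_mul_of_nonneg_right hk (mul_nonneg hu.le (by linarith) : (0:ℝ) ≤ u * (1 - v)),
    pow_pos hv ℓ, pow_pos hu (ℓ-1)]
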